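/- (Proposition 2) Let τ : (ℕ≥1 → ℂ) → ℂ be a nowhere-vanishing function satisfying the three-term equation. Then for every integer m ≥ 2, every x : ℕ≥1 → ℂ, all pairwise distinct α₁, …, α_m ∈ ℂ and all pairwise distinct β₁, …, β_m ∈ ℂ with βᵢ ≠ αⱼ for all i, j, the determinant formula of order m holds: τ(x + Σ_{i=1}^m [βᵢ] − Σ_{i=1}^m [αᵢ]) / τ(x) = ( ∏_{i,j=1}^m (βᵢ−αⱼ) / ∏_{i<j} (αᵢ−αⱼ)(βⱼ−βᵢ) ) · det( τ(x+[βᵢ]−[αⱼ]) / ((βᵢ−αⱼ)τ(x)) )_{1≤i,j≤m}. -/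

import Mathlib

open scoped BigOperators

noncomputable section

/-- Sequences `x = (x₁, x₂, …)` indexed by positive integers, with complex entries. -/
abbrev TSeq : Type := {n : ℕ // 0 < n} → ℂ

/-- `[α]`, the sequence whose `n`-th entry is `αⁿ/n`. -/
noncomputable def ch (α : ℂ) : TSeq := fun n => α ^ (n : ℕ) / ((n : ℕ) : ℂ)

/-- The three-term equation of the KP hierarchy. -/
def ThreeTerm (τ : TSeq → ℂ) : Prop :=
  ∀ (x : TSeq) (α₁ α₂ α₃ α₄ : ℂ),
    (α₁ - α₂) * (α₃ - α₄) * τ (x + ch α₁ + ch α₂) * τ (x + ch α₃ + ch α₄)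
    - (α₁ - α₃) * (α₂ - α₄) * τ (x + ch α₁ + ch α₃) * τ (x + ch α₂ + ch α₄)
    + (α₁ - α₄) * (α₂ - α₃) * τ (x + ch α₁ + ch α₄) * τ (x + ch α₂ + ch α₃) = 0

/-- The determinant formula of order `m` for the KP τ-function at `x`:
`τ(x + Σ[βᵢ] − Σ[αᵢ])/τ(x) = (∏_{i,j}(βᵢ−αⱼ) / ∏_{i<j}(αᵢ−αⱼ)(βⱼ−βᵢ)) ·
det( τ(x+[βᵢ]−[αⱼ]) / ((βᵢ−αⱼ)τ(x)) )`. -/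
def KPDet (τ : TSeq → ℂ) (m : ℕ) (x : TSeq) (α β : Fin m → ℂ) : Prop :=
  τ (x + ∑ i, ch (β i) - ∑ i, ch (α i)) / τ x =
    (∏ i, ∏ j, (β i - α j)) /
      ((∏ i, ∏ j ∈ Finset.Ioi i, (α i - α j)) * (∏ i, ∏ j ∈ Finset.Ioi i, (β j - β i))) *
    Matrix.det (Matrix.of fun i j : Fin m => τ (x + ch (β i) - ch (α j)) / ((β i - α j) * τ x))

section KPAux

open Matrix Finset

open Matrix Finset

/-- split of a pairwise `Ioi`-product over `Fin.cons`. -/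
lemma prodIoi_cons {m : ℕ} (f : ℂ → ℂ → ℂ) (c : ℂ) (v : Fin m → ℂ) :
    (∏ i : Fin (m + 1), ∏ j ∈ Ioi i, f ((Fin.cons c v : Fin (m+1) → ℂ) i) ((Fin.cons c v : Fin (m+1) → ℂ) j))
      = (∏ j, f c (v j)) * ∏ i, ∏ j ∈ Ioi i, f (v i) (v j) := by
  simp only [Fin.prod_univ_succ, Fin.prod_Ioi_zero, Fin.prod_Ioi_succ,
    Fin.cons_zero, Fin.cons_succ]

/-- Desnanot–Jacobi-type identity in block form, inner block invertible. -/
lemma blockDJ {m : ℕ} (A : Matrix (Fin 2) (Fin 2) ℂ) (B : Matrix (Fin 2) (Fin m) ℂ)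
    (C : Matrix (Fin m) (Fin 2) ℂ) (D : Matrix (Fin m) (Fin m) ℂ) (hD : IsUnit D.det) :
    (fromBlocks A B C D).det * D.det =
      (fromBlocks (of fun _ _ : Fin 1 => A 0 0) (of fun _ j => B 0 j)
          (of fun i _ => C i 0) D).det *
        (fromBlocks (of fun _ _ : Fin 1 => A 1 1) (of fun _ j => B 1 j)
          (of fun i _ => C i 1) D).det -
      (fromBlocks (of fun _ _ : Fin 1 => A 0 1) (of fun _ j => B 0 j)
          (of fun i _ => C i 1) D).det *
        (fromBlocks (of fun _ _ : Fin 1 => A 1 0) (of fun _ j => B 1 j)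
          (of fun i _ => C i 0) D).det := by
  have : Invertible D := D.invertibleOfIsUnitDet hD
  have key : ∀ a b : Fin 2,
      (fromBlocks (of fun _ _ : Fin 1 => A a b) (of fun _ j => B a j)
          (of fun i _ => C i b) D).det = D.det * (A - B * ⅟D * C) a b := by
    intro a b
    rw [det_fromBlocks₂₂]
    congr 1
    rw [det_fin_one]
    simp [Matrix.sub_apply, Matrix.mul_apply, Finset.sum_mul, Finset.mul_sum]
  rw [det_fromBlocks₂₂, det_fin_two, key, key, key, key]
  ring

/-- the equivalence putting indices `0, 1` first. -/
def finE2 (m : ℕ) : Fin 2 ⊕ Fin m ≃ Fin (m + 2) where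
  toFun := Sum.elim (fun a => ⟨a.val, by omega⟩) fun j => j.succ.succ
  invFun i := if h : (i : ℕ) < 2 then Sum.inl ⟨i, h⟩ else Sum.inr ⟨(i : ℕ) - 2, by omega⟩
  left_inv := by
    rintro (a | j)
    · simp
      exact Nat.le_of_lt_succ a.isLt
    · have : ¬ ((j.succ.succ : Fin (m + 2)) : ℕ) < 2 := by simp [Fin.val_succ]
      simp only [Sum.elim_inr, this, dif_neg, not_false_iff]
      congr 1
  right_inv := by
    intro i
    by_cases h : (i : ℕ) < 2
    · simp only [dif_pos h, Sum.elim_inl]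
    · simp only [dif_neg h, Sum.elim_inr]
      ext
      simp [Fin.val_succ]
      omega

@[simp] lemma finE2_inl0 {m : ℕ} : finE2 m (Sum.inl 0) = 0 := rfl
@[simp] lemma finE2_inl1 {m : ℕ} : finE2 m (Sum.inl 1) = 1 := by
  ext; simp [finE2]
@[simp] lemma finE2_inr {m : ℕ} (j : Fin m) : finE2 m (Sum.inr j) = j.succ.succ := rfl

/-- the equivalence putting index `0` first. -/
def finE1 (m : ℕ) : Fin 1 ⊕ Fin m ≃ Fin (m + 1) where
  toFun := Sum.elim (fun _ => 0) fun j => j.succ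
  invFun i := if h : (i : ℕ) < 1 then Sum.inl 0 else Sum.inr ⟨(i : ℕ) - 1, by omega⟩
  left_inv := by
    rintro (a | j)
    · simp [Fin.fin_one_eq_zero a]
    · have : ¬ ((j.succ : Fin (m + 1)) : ℕ) < 1 := by simp
      simp only [Sum.elim_inr, this, dif_neg, not_false_iff]
      congr 1
  right_inv := by
    intro i
    by_cases h : (i : ℕ) < 1
    · have : i = 0 := by ext; simp only [Fin.val_zero]; omega
      simp [this, h]
    · simp only [dif_neg h, Sum.elim_inr]
      ext
      simp
      omega

@[simp] lemma finE1_inl {m : ℕ} (a : Fin 1) : finE1 m (Sum.inl a) = 0 := rfl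
@[simp] lemma finE1_inr {m : ℕ} (j : Fin m) : finE1 m (Sum.inr j) = j.succ := rfl

@[simp] lemma cons2_one {k : ℕ} (c0 c1 : ℂ) (v : Fin k → ℂ) :
    (Fin.cons c0 (Fin.cons c1 v) : Fin (k + 2) → ℂ) 1 = c1 := by
  rw [← Fin.succ_zero_eq_one, Fin.cons_succ, Fin.cons_zero]

@[simp] lemma cons2_ss {k : ℕ} (c0 c1 : ℂ) (v : Fin k → ℂ) (j : Fin k) :
    (Fin.cons c0 (Fin.cons c1 v) : Fin (k + 2) → ℂ) j.succ.succ = v j := by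
  rw [Fin.cons_succ, Fin.cons_succ]

lemma prodIoi_cons_sub {m : ℕ} (c : ℂ) (v : Fin m → ℂ) :
    (∏ i : Fin (m + 1), ∏ j ∈ Ioi i,
        ((Fin.cons c v : Fin (m+1) → ℂ) i - (Fin.cons c v : Fin (m+1) → ℂ) j))
      = (∏ j, (c - v j)) * ∏ i, ∏ j ∈ Ioi i, (v i - v j) := by
  simp only [Fin.prod_univ_succ, Fin.prod_Ioi_zero, Fin.prod_Ioi_succ,
    Fin.cons_zero, Fin.cons_succ]

lemma prodIoi_cons_sub' {m : ℕ} (c : ℂ) (v : Fin m → ℂ) :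
    (∏ i : Fin (m + 1), ∏ j ∈ Ioi i,
        ((Fin.cons c v : Fin (m+1) → ℂ) j - (Fin.cons c v : Fin (m+1) → ℂ) i))
      = (∏ j, (v j - c)) * ∏ i, ∏ j ∈ Ioi i, (v j - v i) := by
  simp only [Fin.prod_univ_succ, Fin.prod_Ioi_zero, Fin.prod_Ioi_succ,
    Fin.cons_zero, Fin.cons_succ]

lemma injective_cons_of {k : ℕ} {c : ℂ} {v : Fin k → ℂ}
    (hc : ∀ j, c ≠ v j) (hv : Function.Injective v) :
    Function.Injective (Fin.cons c v : Fin (k + 1) → ℂ) := by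
  rw [Fin.cons_injective_iff]
  exact ⟨fun h => by obtain ⟨j, hj⟩ := h; exact hc j hj.symm, hv⟩

lemma cons2_inj_elim {k : ℕ} {a0 a1 : ℂ} {v : Fin k → ℂ}
    (h : Function.Injective (Fin.cons a0 (Fin.cons a1 v) : Fin (k + 2) → ℂ)) :
    a0 ≠ a1 ∧ (∀ j, a0 ≠ v j) ∧ (∀ j, a1 ≠ v j) ∧ Function.Injective v := by
  rw [Fin.cons_injective_iff, Fin.cons_injective_iff] at h
  obtain ⟨h0, h1, h2⟩ := h
  exact ⟨fun e => h0 ⟨0, by simp [e]⟩, fun j e => h0 ⟨j.succ, by simp [e]⟩,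
    fun j e => h1 ⟨j, e.symm⟩, h2⟩

lemma detSplit {m : ℕ} (g : ℂ → ℂ → ℂ) (a0 a1 b0 b1 : ℂ) (ar br : Fin m → ℂ)
    (hD : (Matrix.of fun i j : Fin m => g (br i) (ar j)).det ≠ 0) :
    (Matrix.of fun i j : Fin (m + 2) =>
        g ((Fin.cons b0 (Fin.cons b1 br) : Fin (m+2) → ℂ) i)
          ((Fin.cons a0 (Fin.cons a1 ar) : Fin (m+2) → ℂ) j)).det *
      (Matrix.of fun i j : Fin m => g (br i) (ar j)).det =
    (Matrix.of fun i j : Fin (m + 1) =>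
        g ((Fin.cons b0 br : Fin (m+1) → ℂ) i) ((Fin.cons a0 ar : Fin (m+1) → ℂ) j)).det *
      (Matrix.of fun i j : Fin (m + 1) =>
        g ((Fin.cons b1 br : Fin (m+1) → ℂ) i) ((Fin.cons a1 ar : Fin (m+1) → ℂ) j)).det -
    (Matrix.of fun i j : Fin (m + 1) =>
        g ((Fin.cons b0 br : Fin (m+1) → ℂ) i) ((Fin.cons a1 ar : Fin (m+1) → ℂ) j)).det *
      (Matrix.of fun i j : Fin (m + 1) =>
        g ((Fin.cons b1 br : Fin (m+1) → ℂ) i) ((Fin.cons a0 ar : Fin (m+1) → ℂ) j)).det := by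
  have hDJ := blockDJ (of fun a b : Fin 2 => g (![b0, b1] a) (![a0, a1] b))
    (of fun a j => g (![b0, b1] a) (ar j)) (of fun i b => g (br i) (![a0, a1] b))
    (of fun i j => g (br i) (ar j)) (isUnit_iff_ne_zero.mpr hD)
  simp only [Matrix.of_apply, Matrix.cons_val_zero, Matrix.cons_val_one, Matrix.head_cons] at hDJ
  have hfull : (Matrix.of fun i j : Fin (m + 2) =>
      g ((Fin.cons b0 (Fin.cons b1 br) : Fin (m+2) → ℂ) i)
        ((Fin.cons a0 (Fin.cons a1 ar) : Fin (m+2) → ℂ) j)).det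
      = (fromBlocks (of fun a b : Fin 2 => g (![b0, b1] a) (![a0, a1] b))
          (of fun a j => g (![b0, b1] a) (ar j)) (of fun i b => g (br i) (![a0, a1] b))
          (of fun i j => g (br i) (ar j))).det := by
    rw [← Matrix.det_submatrix_equiv_self (finE2 m)]
    congr 1
    ext i j
    rcases i with a | i <;> rcases j with b | j
    · fin_cases a <;> fin_cases b <;>
        simp [Matrix.submatrix_apply, Fin.mk_zero, Fin.mk_one]
    · fin_cases a <;> simp [Matrix.submatrix_apply, Fin.mk_zero, Fin.mk_one]
    · fin_cases b <;> simp [Matrix.submatrix_apply, Fin.mk_zero, Fin.mk_one]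
    · simp [Matrix.submatrix_apply]
  have hP : ∀ (c d : ℂ),
      (fromBlocks (of fun _ _ : Fin 1 => g c d) (of fun _ j => g c (ar j))
        (of fun i _ => g (br i) d) (of fun i j => g (br i) (ar j))).det
      = (Matrix.of fun i j : Fin (m + 1) =>
          g ((Fin.cons c br : Fin (m+1) → ℂ) i) ((Fin.cons d ar : Fin (m+1) → ℂ) j)).det := by
    intro c d
    rw [← Matrix.det_submatrix_equiv_self (finE1 m)
      (Matrix.of fun i j : Fin (m + 1) =>
        g ((Fin.cons c br : Fin (m+1) → ℂ) i) ((Fin.cons d ar : Fin (m+1) → ℂ) j))]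
    congr 1
    ext i j
    rcases i with a | i <;> rcases j with b | j <;>
      simp [Matrix.submatrix_apply]
  rw [hfull, hDJ, hP b0 a0, hP b1 a1, hP b0 a1, hP b1 a0]

lemma KPDet_one (τ : TSeq → ℂ) (x : TSeq) (hτx : τ x ≠ 0) (α β : Fin 1 → ℂ)
    (h : β 0 ≠ α 0) : KPDet τ 1 x α β := by
  unfold KPDet
  have hIoi : (Finset.Ioi (0 : Fin 1)) = ∅ := by
    rw [Finset.eq_empty_iff_forall_notMem]
    intro i hi
    have := Finset.mem_Ioi.mp hi
    omega
  have hba : β 0 - α 0 ≠ 0 := sub_ne_zero_of_ne h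
  simp only [Fin.sum_univ_one, Fin.prod_univ_one, Matrix.det_fin_one, Matrix.of_apply,
    hIoi, Finset.prod_empty, one_mul, div_one]
  field_simp

end KPAux

/-- Proposition 2: the three-term equation implies the determinant formulae of all
orders `m ≥ 2`. -/

theorem KP_threeTerm_implies_determinantFormula (τ : TSeq → ℂ) (hτ : ∀ x, τ x ≠ 0)
    (h3 : ThreeTerm τ) :
    ∀ (m : ℕ), 2 ≤ m → ∀ (x : TSeq) (α β : Fin m → ℂ),
      Function.Injective α → Function.Injective β →
      (∀ i j, β i ≠ α j) → KPDet τ m x α β := by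
  suffices H : ∀ (n : ℕ) (x : TSeq) (α β : Fin n → ℂ), Function.Injective α →
      Function.Injective β → (∀ i j, β i ≠ α j) → KPDet τ n x α β by
    intro m _ x α β hα hβ hij
    exact H m x α β hα hβ hij
  intro n
  induction n using Nat.strong_induction_on with
  | _ n IH =>
  rcases n with _ | n
  · intro x α β _ _ _
    unfold KPDet
    simp only [Finset.univ_eq_empty, Finset.sum_empty, Finset.prod_empty,
      Matrix.det_isEmpty, add_zero, sub_zero, one_mul, mul_one]
    rw [div_self (hτ x), div_one]
  rcases n with _ | m
  · intro x α β hα hβ hij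
    unfold KPDet
    exact KPDet_one τ x (hτ x) α β (hij 0 0)
  · intro x α β hα hβ hij
    show KPDet τ (m + 2) x α β
    obtain ⟨a0, a1, ar, rfl⟩ : ∃ a0 a1 ar, α = Fin.cons a0 (Fin.cons a1 ar) :=
      ⟨α 0, Fin.tail α 0, Fin.tail (Fin.tail α), by rw [Fin.cons_self_tail, Fin.cons_self_tail]⟩
    obtain ⟨b0, b1, br, rfl⟩ : ∃ b0 b1 br, β = Fin.cons b0 (Fin.cons b1 br) :=
      ⟨β 0, Fin.tail β 0, Fin.tail (Fin.tail β), by rw [Fin.cons_self_tail, Fin.cons_self_tail]⟩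
    obtain ⟨ha01, h0ar, h1ar, harinj⟩ := cons2_inj_elim hα
    obtain ⟨hb01, h0br, h1br, hbrinj⟩ := cons2_inj_elim hβ
    have h00 : b0 ≠ a0 := by simpa using hij 0 0
    have h01 : b0 ≠ a1 := by simpa using hij 0 1
    have h10 : b1 ≠ a0 := by simpa using hij 1 0
    have h11 : b1 ≠ a1 := by simpa using hij 1 1
    have h0r : ∀ j, b0 ≠ ar j := fun j => by simpa using hij 0 j.succ.succ
    have h1r : ∀ j, b1 ≠ ar j := fun j => by simpa using hij 1 j.succ.succ
    have hr0 : ∀ i, br i ≠ a0 := fun i => by simpa using hij i.succ.succ 0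
    have hr1 : ∀ i, br i ≠ a1 := fun i => by simpa using hij i.succ.succ 1
    have hrr : ∀ i j, br i ≠ ar j := fun i j => by simpa using hij i.succ.succ j.succ.succ
    -- inner determinant formula (size m)
    have hIn := IH m (by omega) x ar br harinj hbrinj hrr
    unfold KPDet at hIn
    -- the four (m+1)-size determinant formulas
    have hne00 : ∀ i j, (Fin.cons b0 br : Fin (m+1) → ℂ) i ≠ (Fin.cons a0 ar : Fin (m+1) → ℂ) j := by
      intro i j
      induction i using Fin.cases <;> induction j using Fin.cases <;>
        simp [Fin.cons_zero, Fin.cons_succ, h00, h0r, hr0, hrr]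
    have hne01 : ∀ i j, (Fin.cons b0 br : Fin (m+1) → ℂ) i ≠ (Fin.cons a1 ar : Fin (m+1) → ℂ) j := by
      intro i j
      induction i using Fin.cases <;> induction j using Fin.cases <;>
        simp [Fin.cons_zero, Fin.cons_succ, h01, h0r, hr1, hrr]
    have hne10 : ∀ i j, (Fin.cons b1 br : Fin (m+1) → ℂ) i ≠ (Fin.cons a0 ar : Fin (m+1) → ℂ) j := by
      intro i j
      induction i using Fin.cases <;> induction j using Fin.cases <;>
        simp [Fin.cons_zero, Fin.cons_succ, h10, h1r, hr0, hrr]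
    have hne11 : ∀ i j, (Fin.cons b1 br : Fin (m+1) → ℂ) i ≠ (Fin.cons a1 ar : Fin (m+1) → ℂ) j := by
      intro i j
      induction i using Fin.cases <;> induction j using Fin.cases <;>
        simp [Fin.cons_zero, Fin.cons_succ, h11, h1r, hr1, hrr]
    have hQ00 := IH (m+1) (by omega) x (Fin.cons a0 ar) (Fin.cons b0 br)
      (injective_cons_of h0ar harinj) (injective_cons_of h0br hbrinj) hne00
    have hQ01 := IH (m+1) (by omega) x (Fin.cons a1 ar) (Fin.cons b0 br)
      (injective_cons_of h1ar harinj) (injective_cons_of h0br hbrinj) hne01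
    have hQ10 := IH (m+1) (by omega) x (Fin.cons a0 ar) (Fin.cons b1 br)
      (injective_cons_of h0ar harinj) (injective_cons_of h1br hbrinj) hne10
    have hQ11 := IH (m+1) (by omega) x (Fin.cons a1 ar) (Fin.cons b1 br)
      (injective_cons_of h1ar harinj) (injective_cons_of h1br hbrinj) hne11
    unfold KPDet at hQ00 hQ01 hQ10 hQ11 ⊢
    have hτx := hτ x
    -- the inner determinant is nonzero
    have hdD : (Matrix.of fun i j : Fin m =>
        τ (x + ch (br i) - ch (ar j)) / ((br i - ar j) * τ x)).det ≠ 0 := by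
      intro h0
      rw [h0, mul_zero] at hIn
      exact (div_ne_zero (hτ _) hτx) hIn
    have key := detSplit (fun c d => τ (x + ch c - ch d) / ((c - d) * τ x)) a0 a1 b0 b1 ar br hdD
    beta_reduce at key
    -- normalize products and sums
    simp only [prodIoi_cons_sub, prodIoi_cons_sub'] at hQ00 hQ01 hQ10 hQ11 ⊢
    simp only [Fin.sum_univ_succ, Fin.prod_univ_succ, Fin.cons_zero, Fin.cons_succ,
      Finset.prod_mul_distrib] at hQ00 hQ01 hQ10 hQ11 ⊢
    -- three-term equation at the shifted point
    have hTT := h3 (x + (∑ i : Fin m, ch (br i) - (ch a0 + (ch a1 + ∑ i : Fin m, ch (ar i)))))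
      b0 b1 a0 a1
    have e1 : x + (∑ i : Fin m, ch (br i) - (ch a0 + (ch a1 + ∑ i : Fin m, ch (ar i))))
        + ch b0 + ch b1
        = x + (ch b0 + (ch b1 + ∑ i : Fin m, ch (br i)))
          - (ch a0 + (ch a1 + ∑ i : Fin m, ch (ar i))) := by abel
    have e2 : x + (∑ i : Fin m, ch (br i) - (ch a0 + (ch a1 + ∑ i : Fin m, ch (ar i))))
        + ch a0 + ch a1
        = x + ∑ i : Fin m, ch (br i) - ∑ i : Fin m, ch (ar i) := by abel
    have e3 : x + (∑ i : Fin m, ch (br i) - (ch a0 + (ch a1 + ∑ i : Fin m, ch (ar i))))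
        + ch b0 + ch a0
        = x + (ch b0 + ∑ i : Fin m, ch (br i)) - (ch a1 + ∑ i : Fin m, ch (ar i)) := by abel
    have e4 : x + (∑ i : Fin m, ch (br i) - (ch a0 + (ch a1 + ∑ i : Fin m, ch (ar i))))
        + ch b1 + ch a1
        = x + (ch b1 + ∑ i : Fin m, ch (br i)) - (ch a0 + ∑ i : Fin m, ch (ar i)) := by abel
    have e5 : x + (∑ i : Fin m, ch (br i) - (ch a0 + (ch a1 + ∑ i : Fin m, ch (ar i))))
        + ch b0 + ch a1
        = x + (ch b0 + ∑ i : Fin m, ch (br i)) - (ch a0 + ∑ i : Fin m, ch (ar i)) := by abel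
    have e6 : x + (∑ i : Fin m, ch (br i) - (ch a0 + (ch a1 + ∑ i : Fin m, ch (ar i))))
        + ch b1 + ch a0
        = x + (ch b1 + ∑ i : Fin m, ch (br i)) - (ch a1 + ∑ i : Fin m, ch (ar i)) := by abel
    rw [e1, e2, e3, e4, e5, e6] at hTT
    clear e1 e2 e3 e4 e5 e6 hij hα hβ hne00 hne01 hne10 hne11
    -- nonzero facts
    have nd00 : b0 - a0 ≠ 0 := sub_ne_zero_of_ne h00
    have nd01 : b0 - a1 ≠ 0 := sub_ne_zero_of_ne h01
    have nd10 : b1 - a0 ≠ 0 := sub_ne_zero_of_ne h10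
    have nd11 : b1 - a1 ≠ 0 := sub_ne_zero_of_ne h11
    have ndaa : a0 - a1 ≠ 0 := sub_ne_zero_of_ne ha01
    have ndbb : b0 - b1 ≠ 0 := sub_ne_zero_of_ne hb01
    have ndbb' : b1 - b0 ≠ 0 := sub_ne_zero_of_ne (Ne.symm hb01)
    have nAbr0 : (∏ i : Fin m, (br i - a0)) ≠ 0 :=
      Finset.prod_ne_zero_iff.mpr fun i _ => sub_ne_zero_of_ne (hr0 i)
    have nAbr1 : (∏ i : Fin m, (br i - a1)) ≠ 0 :=
      Finset.prod_ne_zero_iff.mpr fun i _ => sub_ne_zero_of_ne (hr1 i)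
    have nBar0 : (∏ j : Fin m, (b0 - ar j)) ≠ 0 :=
      Finset.prod_ne_zero_iff.mpr fun j _ => sub_ne_zero_of_ne (h0r j)
    have nBar1 : (∏ j : Fin m, (b1 - ar j)) ≠ 0 :=
      Finset.prod_ne_zero_iff.mpr fun j _ => sub_ne_zero_of_ne (h1r j)
    have nAar0 : (∏ j : Fin m, (a0 - ar j)) ≠ 0 :=
      Finset.prod_ne_zero_iff.mpr fun j _ => sub_ne_zero_of_ne (h0ar j)
    have nAar1 : (∏ j : Fin m, (a1 - ar j)) ≠ 0 :=
      Finset.prod_ne_zero_iff.mpr fun j _ => sub_ne_zero_of_ne (h1ar j)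
    have nBbr0 : (∏ i : Fin m, (br i - b0)) ≠ 0 :=
      Finset.prod_ne_zero_iff.mpr fun i _ => sub_ne_zero_of_ne (Ne.symm (h0br i))
    have nBbr1 : (∏ i : Fin m, (br i - b1)) ≠ 0 :=
      Finset.prod_ne_zero_iff.mpr fun i _ => sub_ne_zero_of_ne (Ne.symm (h1br i))
    have nDP : (∏ i : Fin m, ∏ j : Fin m, (br i - ar j)) ≠ 0 :=
      Finset.prod_ne_zero_iff.mpr fun i _ =>
        Finset.prod_ne_zero_iff.mpr fun j _ => sub_ne_zero_of_ne (hrr i j)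
    have nV : (∏ i : Fin m, ∏ j ∈ Finset.Ioi i, (ar i - ar j)) ≠ 0 :=
      Finset.prod_ne_zero_iff.mpr fun i _ =>
        Finset.prod_ne_zero_iff.mpr fun j hj =>
          sub_ne_zero_of_ne fun e => absurd (harinj e) (Finset.mem_Ioi.mp hj).ne
    have nW : (∏ i : Fin m, ∏ j ∈ Finset.Ioi i, (br j - br i)) ≠ 0 :=
      Finset.prod_ne_zero_iff.mpr fun i _ =>
        Finset.prod_ne_zero_iff.mpr fun j hj =>
          sub_ne_zero_of_ne fun e => absurd (hbrinj e) (Finset.mem_Ioi.mp hj).ne'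
    have nTin : τ (x + ∑ i : Fin m, ch (br i) - ∑ i : Fin m, ch (ar i)) ≠ 0 := hτ _
    set t := τ x with htdef
    set Tfull := τ (x + (ch b0 + (ch b1 + ∑ i : Fin m, ch (br i))) - (ch a0 + (ch a1 + ∑ i : Fin m, ch (ar i)))) with hTfulldef
    set Tin := τ (x + ∑ i : Fin m, ch (br i) - ∑ i : Fin m, ch (ar i)) with hTindef
    set T00 := τ (x + (ch b0 + ∑ i : Fin m, ch (br i)) - (ch a0 + ∑ i : Fin m, ch (ar i))) with hT00def
    set T01 := τ (x + (ch b0 + ∑ i : Fin m, ch (br i)) - (ch a1 + ∑ i : Fin m, ch (ar i))) with hT01def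
    set T10 := τ (x + (ch b1 + ∑ i : Fin m, ch (br i)) - (ch a0 + ∑ i : Fin m, ch (ar i))) with hT10def
    set T11 := τ (x + (ch b1 + ∑ i : Fin m, ch (br i)) - (ch a1 + ∑ i : Fin m, ch (ar i))) with hT11def
    set Aar0 : ℂ := ∏ j : Fin m, (a0 - ar j) with hAar0def
    set Aar1 : ℂ := ∏ j : Fin m, (a1 - ar j) with hAar1def
    set Bar0 : ℂ := ∏ j : Fin m, (b0 - ar j) with hBar0def
    set Bar1 : ℂ := ∏ j : Fin m, (b1 - ar j) with hBar1def
    set Abr0 : ℂ := ∏ i : Fin m, (br i - a0) with hAbr0def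
    set Abr1 : ℂ := ∏ i : Fin m, (br i - a1) with hAbr1def
    set Bbr0 : ℂ := ∏ i : Fin m, (br i - b0) with hBbr0def
    set Bbr1 : ℂ := ∏ i : Fin m, (br i - b1) with hBbr1def
    set DP : ℂ := ∏ i : Fin m, ∏ j : Fin m, (br i - ar j) with hDPdef
    set Vv : ℂ := ∏ i : Fin m, ∏ j ∈ Finset.Ioi i, (ar i - ar j) with hVvdef
    set Ww : ℂ := ∏ i : Fin m, ∏ j ∈ Finset.Ioi i, (br j - br i) with hWwdef
    set q00 : ℂ := (Matrix.of fun i j : Fin (m+1) => τ (x + ch ((Fin.cons b0 br : Fin (m+1) → ℂ) i) - ch ((Fin.cons a0 ar : Fin (m+1) → ℂ) j)) / (((Fin.cons b0 br : Fin (m+1) → ℂ) i - (Fin.cons a0 ar : Fin (m+1) → ℂ) j) * t)).det with hq00def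
    set q01 : ℂ := (Matrix.of fun i j : Fin (m+1) => τ (x + ch ((Fin.cons b0 br : Fin (m+1) → ℂ) i) - ch ((Fin.cons a1 ar : Fin (m+1) → ℂ) j)) / (((Fin.cons b0 br : Fin (m+1) → ℂ) i - (Fin.cons a1 ar : Fin (m+1) → ℂ) j) * t)).det with hq01def
    set q10 : ℂ := (Matrix.of fun i j : Fin (m+1) => τ (x + ch ((Fin.cons b1 br : Fin (m+1) → ℂ) i) - ch ((Fin.cons a0 ar : Fin (m+1) → ℂ) j)) / (((Fin.cons b1 br : Fin (m+1) → ℂ) i - (Fin.cons a0 ar : Fin (m+1) → ℂ) j) * t)).det with hq10def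
    set q11 : ℂ := (Matrix.of fun i j : Fin (m+1) => τ (x + ch ((Fin.cons b1 br : Fin (m+1) → ℂ) i) - ch ((Fin.cons a1 ar : Fin (m+1) → ℂ) j)) / (((Fin.cons b1 br : Fin (m+1) → ℂ) i - (Fin.cons a1 ar : Fin (m+1) → ℂ) j) * t)).det with hq11def
    set dD : ℂ := (Matrix.of fun i j : Fin m => τ (x + ch (br i) - ch (ar j)) / ((br i - ar j) * t)).det with hdDdef
    set dM : ℂ := (Matrix.of fun i j : Fin (m+2) => τ (x + ch ((Fin.cons b0 (Fin.cons b1 br) : Fin (m+2) → ℂ) i) - ch ((Fin.cons a0 (Fin.cons a1 ar) : Fin (m+2) → ℂ) j)) / (((Fin.cons b0 (Fin.cons b1 br) : Fin (m+2) → ℂ) i - (Fin.cons a0 (Fin.cons a1 ar) : Fin (m+2) → ℂ) j) * t)).det with hdMdef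
    -- clear denominators in all determinant formulas
    rw [div_eq_iff hτx, div_mul_eq_mul_div, div_mul_eq_mul_div,
      eq_div_iff (mul_ne_zero (mul_ne_zero nAar0 nV) (mul_ne_zero nBbr0 nW))] at hQ00
    rw [div_eq_iff hτx, div_mul_eq_mul_div, div_mul_eq_mul_div,
      eq_div_iff (mul_ne_zero (mul_ne_zero nAar1 nV) (mul_ne_zero nBbr0 nW))] at hQ01
    rw [div_eq_iff hτx, div_mul_eq_mul_div, div_mul_eq_mul_div,
      eq_div_iff (mul_ne_zero (mul_ne_zero nAar0 nV) (mul_ne_zero nBbr1 nW))] at hQ10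
    rw [div_eq_iff hτx, div_mul_eq_mul_div, div_mul_eq_mul_div,
      eq_div_iff (mul_ne_zero (mul_ne_zero nAar1 nV) (mul_ne_zero nBbr1 nW))] at hQ11
    rw [div_eq_iff hτx, div_mul_eq_mul_div, div_mul_eq_mul_div,
      eq_div_iff (mul_ne_zero nV nW)] at hIn
    rw [div_eq_iff hτx, div_mul_eq_mul_div, div_mul_eq_mul_div,
      eq_div_iff (mul_ne_zero
        (mul_ne_zero (mul_ne_zero ndaa nAar0) (mul_ne_zero nAar1 nV))
        (mul_ne_zero (mul_ne_zero ndbb' nBbr0) (mul_ne_zero nBbr1 nW)))]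
    -- combine pairwise
    have s1 : T00 * T11 * ((Aar0 * Vv) * (Bbr0 * Ww) * ((Aar1 * Vv) * (Bbr1 * Ww))) =
        ((b0 - a0) * Abr0 * (Bar0 * DP)) * ((b1 - a1) * Abr1 * (Bar1 * DP)) *
          (q00 * q11) * (t * t) := by
      linear_combination (T11 * ((Aar1 * Vv) * (Bbr1 * Ww))) * hQ00 +
        (((b0 - a0) * Abr0 * (Bar0 * DP)) * q00 * t) * hQ11
    have s2 : T01 * T10 * ((Aar1 * Vv) * (Bbr0 * Ww) * ((Aar0 * Vv) * (Bbr1 * Ww))) =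
        ((b0 - a1) * Abr1 * (Bar0 * DP)) * ((b1 - a0) * Abr0 * (Bar1 * DP)) *
          (q01 * q10) * (t * t) := by
      linear_combination (T10 * ((Aar0 * Vv) * (Bbr1 * Ww))) * hQ01 +
        (((b0 - a1) * Abr1 * (Bar0 * DP)) * q01 * t) * hQ10
    -- use the Desnanot–Jacobi relation
    have s3 : dM * dD * ((b0 - a0) * (b1 - a1) * (b0 - a1) * (b1 - a0) *
          (Abr0 * Abr1 * Bar0 * Bar1 * (DP * DP)) * (t * t)) =
        ((b0 - a1) * (b1 - a0) * (T00 * T11) - (b0 - a0) * (b1 - a1) * (T01 * T10)) *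
          (Aar0 * Aar1 * Vv * Vv * Bbr0 * Bbr1 * Ww * Ww) := by
      linear_combination ((b0 - a0) * (b1 - a1) * (b0 - a1) * (b1 - a0) *
          (Abr0 * Abr1 * Bar0 * Bar1 * (DP * DP)) * (t * t)) * key -
        ((b0 - a1) * (b1 - a0)) * s1 + ((b0 - a0) * (b1 - a1)) * s2
    -- eliminate the inner determinant
    have s4 : dM * (((b0 - a0) * (b1 - a1) * (b0 - a1) * (b1 - a0) *
          (Abr0 * Abr1 * Bar0 * Bar1 * (DP * DP)) * (t * t)) * (Tin * (Vv * Ww))) =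
        ((b0 - a1) * (b1 - a0) * (T00 * T11) - (b0 - a0) * (b1 - a1) * (T01 * T10)) *
          (Aar0 * Aar1 * Vv * Vv * Bbr0 * Bbr1 * Ww * Ww) * (DP * t) := by
      linear_combination (DP * t) * s3 + (((b0 - a0) * (b1 - a1) * (b0 - a1) * (b1 - a0) *
        (Abr0 * Abr1 * Bar0 * Bar1 * (DP * DP)) * (t * t)) * dM) * hIn
    -- assemble, using the three-term equation
    have nC : ((b0 - b1) * (a0 - a1) * Tin * ((b0 - a0) * (b1 - a1) * (b0 - a1) * (b1 - a0) *
        (Abr0 * Abr1 * Bar0 * Bar1 * (DP * DP)) * (t * t)) * (Vv * Ww)) ≠ 0 := by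
      apply_rules [mul_ne_zero]
    refine mul_left_cancel₀ nC ?_
    linear_combination (((a0 - a1) * Aar0 * (Aar1 * Vv) * ((b1 - b0) * Bbr0 * (Bbr1 * Ww))) *
        ((b0 - a0) * (b1 - a1) * (b0 - a1) * (b1 - a0) *
          (Abr0 * Abr1 * Bar0 * Bar1 * (DP * DP)) * (t * t)) * Vv * Ww) * hTT -
      (((b0 - a0) * ((b1 - a0) * Abr0) * ((b0 - a1) * ((b1 - a1) * Abr1) * (Bar0 * (Bar1 * DP)))) *
        t * (b0 - b1) * (a0 - a1)) * s4

end
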